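/- Parabolic Hölder bound for diagonal integrals of second derivatives: let α ∈ (0,1), 0 < δ ≤ 1, and let w ∈ Θ^{(2+α)}_{[0,δ]} be such that for each t ∈ [0,δ] the function w(t,·,·) has continuous partial derivatives w_s, w_{y_i}, w_{y_iy_j} on [0,t]×ℝ^d. Then for each t ∈ [0,δ] and each pair i,j ∈ {1,…,d}, the function (s,y) ↦ ∫_s^t w_{y_iy_j}(θ,s,y)dθ on [0,t]×ℝ^d satisfies |∫_·^t w_{y_iy_j}(θ,·,·)dθ|^{(α)}_{[0,t]×ℝ^d} ≤ 4 δ^{1−α/2} [w]^{(2+α)}_{[0,δ]}. -/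

import Mathlib

open Set MeasureTheory
open scoped ENNReal BigOperators

noncomputable section

/-- `ℝ^d`. -/
abbrev Vec (d : ℕ) := Fin d → ℝ

/-- `d × d` real matrices, encoded as nested functions. -/
abbrev Mat (d : ℕ) := Fin d → Fin d → ℝ

variable {d : ℕ}

/-- Partial derivative in the external time parameter `t` of `u(t,s,y)`. -/
def pt (u : ℝ → ℝ → Vec d → ℝ) : ℝ → ℝ → Vec d → ℝ :=
  fun t s y => deriv (fun t' => u t' s y) t

/-- Partial derivative in the running time `s` of `u(t,s,y)`. -/
def ps (u : ℝ → ℝ → Vec d → ℝ) : ℝ → ℝ → Vec d → ℝ :=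
  fun t s y => deriv (fun s' => u t s' y) s

/-- Partial derivative in the `i`-th space coordinate of `u(t,s,y)`. -/
def py (i : Fin d) (u : ℝ → ℝ → Vec d → ℝ) : ℝ → ℝ → Vec d → ℝ :=
  fun t s y => deriv (fun r => u t s (Function.update y i r)) (y i)

/-- Second-order spatial partial derivative of `u(t,s,y)`. -/
def pyy (i j : Fin d) (u : ℝ → ℝ → Vec d → ℝ) : ℝ → ℝ → Vec d → ℝ :=
  py i (py j u)

/-- Derivative in the first (time) variable of a two-argument function `φ`. -/
def qs (φ : ℝ → Vec d → ℝ) : ℝ → Vec d → ℝ :=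
  fun s y => deriv (fun s' => φ s' y) s

/-- Derivative in the `i`-th space coordinate of a two-argument function `φ`. -/
def qy (i : Fin d) (φ : ℝ → Vec d → ℝ) : ℝ → Vec d → ℝ :=
  fun s y => deriv (fun r => φ s (Function.update y i r)) (y i)

/-- Second-order spatial derivative of a two-argument function `φ`. -/
def qyy (i j : Fin d) (φ : ℝ → Vec d → ℝ) : ℝ → Vec d → ℝ := qy i (qy j φ)

/-- Sup-norm `|φ|^∞` of `φ` over `[a,b] × ℝ^d`, valued in `ℝ≥0∞`. -/
def supN (a b : ℝ) (φ : ℝ → Vec d → ℝ) : ℝ≥0∞ :=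
  ⨆ s ∈ Set.Icc a b, ⨆ y : Vec d, ENNReal.ofReal |φ s y|

/-- Hölder (exponent `α/2`) seminorm of `φ` in the time variable over `[a,b] × ℝ^d`. -/
def semiS (α a b : ℝ) (φ : ℝ → Vec d → ℝ) : ℝ≥0∞ :=
  ⨆ s ∈ Set.Icc a b, ⨆ s' ∈ Set.Icc a b, ⨆ (_ : s ≠ s'), ⨆ y : Vec d,
    ENNReal.ofReal (|φ s y - φ s' y| / |s - s'| ^ (α / 2))

/-- Hölder (exponent `α`) seminorm of `φ` in the space variable over `[a,b] × ℝ^d`. -/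
def semiY (α a b : ℝ) (φ : ℝ → Vec d → ℝ) : ℝ≥0∞ :=
  ⨆ s ∈ Set.Icc a b, ⨆ y : Vec d, ⨆ y' : Vec d, ⨆ (_ : y ≠ y'),
    ENNReal.ofReal (|φ s y - φ s y'| / ‖y - y'‖ ^ α)

/-- The parabolic Hölder norm `|·|^{(α)}_{[a,b]×ℝ^d}`. -/
def hN (α a b : ℝ) (φ : ℝ → Vec d → ℝ) : ℝ≥0∞ :=
  supN a b φ + semiS α a b φ + semiY α a b φ

/-- The parabolic Hölder norm `|·|^{(2+α)}_{[a,b]×ℝ^d}`. -/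
def h2N (α a b : ℝ) (φ : ℝ → Vec d → ℝ) : ℝ≥0∞ :=
  supN a b φ + hN α a b (qs φ) + (∑ i : Fin d, supN a b (qy i φ)) +
    ∑ i : Fin d, ∑ j : Fin d, hN α a b (qyy i j φ)

/-- The norm `[φ]^{(α)}_{[0,δ]}`. -/
def brA (α δ : ℝ) (u : ℝ → ℝ → Vec d → ℝ) : ℝ≥0∞ :=
  ⨆ t ∈ Set.Icc (0:ℝ) δ, hN α 0 t (u t)

/-- The norm `[φ]^{(2+α)}_{[0,δ]}`. -/
def br2 (α δ : ℝ) (u : ℝ → ℝ → Vec d → ℝ) : ℝ≥0∞ :=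
  ⨆ t ∈ Set.Icc (0:ℝ) δ, h2N α 0 t (u t)

/-- The norm `‖φ‖^{(α)}_{[0,δ]}`. -/
def barA (α δ : ℝ) (u : ℝ → ℝ → Vec d → ℝ) : ℝ≥0∞ :=
  ⨆ t ∈ Set.Icc (0:ℝ) δ, (hN α 0 t (u t) + hN α 0 t (pt u t))

/-- The norm `‖φ‖^{(2+α)}_{[0,δ]}`. -/
def bar2 (α δ : ℝ) (u : ℝ → ℝ → Vec d → ℝ) : ℝ≥0∞ :=
  ⨆ t ∈ Set.Icc (0:ℝ) δ, (h2N α 0 t (u t) + h2N α 0 t (pt u t))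

/-- The triangular time-space domain `Δ[0,δ] × ℝ^d`. -/
def Tri (d : ℕ) (δ : ℝ) : Set (ℝ × ℝ × Vec d) :=
  {p | 0 ≤ p.2.1 ∧ p.2.1 ≤ p.1 ∧ p.1 ≤ δ}

/-- Joint continuity on `Δ[0,δ] × ℝ^d`. -/
def ContOnTri (δ : ℝ) (u : ℝ → ℝ → Vec d → ℝ) : Prop :=
  ContinuousOn (fun p : ℝ × ℝ × Vec d => u p.1 p.2.1 p.2.2) (Tri d δ)

/-- Existence of the first derivative in `s` and first and second derivatives in `y`. -/
def DiffSY (δ : ℝ) (u : ℝ → ℝ → Vec d → ℝ) : Prop :=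
  ∀ t s y, 0 ≤ s → s ≤ t → t ≤ δ →
    DifferentiableAt ℝ (fun s' => u t s' y) s ∧
    (∀ i : Fin d, DifferentiableAt ℝ (fun r => u t s (Function.update y i r)) (y i)) ∧
    (∀ i j : Fin d, DifferentiableAt ℝ (fun r => py j u t s (Function.update y i r)) (y i))

/-- `u` is of class `C^{1,2}` in `(s,y)` on the triangle, with jointly continuous derivatives. -/
def ClassicalOn (δ : ℝ) (u : ℝ → ℝ → Vec d → ℝ) : Prop :=
  ContOnTri δ u ∧ DiffSY δ u ∧ ContOnTri δ (ps u) ∧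
    (∀ i : Fin d, ContOnTri δ (py i u)) ∧ ∀ i j : Fin d, ContOnTri δ (pyy i j u)

/-- Differentiability in the parameter `t` on the triangle. -/
def DiffT (δ : ℝ) (u : ℝ → ℝ → Vec d → ℝ) : Prop :=
  ∀ t s y, 0 ≤ s → s ≤ t → t ≤ δ → DifferentiableAt ℝ (fun t' => u t' s y) t

/-- Membership in `Θ^{(α)}_{[0,δ]}`. -/
def MemThetaA (α δ : ℝ) (u : ℝ → ℝ → Vec d → ℝ) : Prop :=
  ContOnTri δ u ∧ brA α δ u < ⊤

/-- Membership in `Θ^{(2+α)}_{[0,δ]}`. -/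
def MemTheta2 (α δ : ℝ) (u : ℝ → ℝ → Vec d → ℝ) : Prop :=
  ClassicalOn δ u ∧ br2 α δ u < ⊤

/-- Membership in `Ω^{(α)}_{[0,δ]}`. -/
def MemOmegaA (α δ : ℝ) (u : ℝ → ℝ → Vec d → ℝ) : Prop :=
  ContOnTri δ u ∧ DiffT δ u ∧ ContOnTri δ (pt u) ∧ barA α δ u < ⊤

/-- Membership in `Ω^{(2+α)}_{[0,δ]}`. -/
def MemOmega2 (α δ : ℝ) (u : ℝ → ℝ → Vec d → ℝ) : Prop :=
  ClassicalOn δ u ∧ DiffT δ u ∧ ClassicalOn δ (pt u) ∧ bar2 α δ u < ⊤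

/-- Lift a function of `(t,y)` to a function of `(t,s,y)` constant in `s`. -/
def liftTY (g : ℝ → Vec d → ℝ) : ℝ → ℝ → Vec d → ℝ := fun t _ y => g t y


section AuxProofs

variable {d : ℕ}

lemma pyy_eq_qyy' (i j : Fin d) (w : ℝ → ℝ → Vec d → ℝ) (t : ℝ) :
    pyy i j w t = qyy i j (w t) := rfl

lemma hN_qyy_le_br2 (α δ : ℝ) (w : ℝ → ℝ → Vec d → ℝ) (i j : Fin d) {θ : ℝ}
    (hθ : θ ∈ Set.Icc (0:ℝ) δ) : hN α 0 θ (qyy i j (w θ)) ≤ br2 α δ w := by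
  have h1 : hN α 0 θ (qyy i j (w θ)) ≤
      ∑ i' : Fin d, ∑ j' : Fin d, hN α 0 θ (qyy i' j' (w θ)) :=
    le_trans
      (Finset.single_le_sum (f := fun j' => hN α 0 θ (qyy i j' (w θ)))
        (fun _ _ => zero_le) (Finset.mem_univ j))
      (Finset.single_le_sum (f := fun i' => ∑ j' : Fin d, hN α 0 θ (qyy i' j' (w θ)))
        (fun _ _ => zero_le) (Finset.mem_univ i))
  refine le_trans h1 (le_trans ?_ (le_biSup (fun t => h2N α 0 t (w t)) hθ))
  unfold h2N
  exact self_le_add_left _ _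

lemma supN_le_hN (α a b : ℝ) (φ : ℝ → Vec d → ℝ) : supN a b φ ≤ hN α a b φ := by
  unfold hN
  exact le_trans le_self_add le_self_add

lemma semiS_le_hN (α a b : ℝ) (φ : ℝ → Vec d → ℝ) : semiS α a b φ ≤ hN α a b φ := by
  unfold hN
  exact le_trans le_add_self le_self_add

lemma semiY_le_hN (α a b : ℝ) (φ : ℝ → Vec d → ℝ) : semiY α a b φ ≤ hN α a b φ := by
  unfold hN
  exact self_le_add_left _ _

lemma sup_bound (α δ : ℝ) (w : ℝ → ℝ → Vec d → ℝ) (i j : Fin d)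
    (hfin : br2 α δ w ≠ ⊤) {θ s : ℝ} (y : Vec d)
    (h0s : 0 ≤ s) (hsθ : s ≤ θ) (hθδ : θ ≤ δ) :
    |pyy i j w θ s y| ≤ (br2 α δ w).toReal := by
  rw [← ENNReal.ofReal_le_iff_le_toReal hfin]
  refine le_trans ?_ (le_trans (supN_le_hN α 0 θ (qyy i j (w θ)))
    (hN_qyy_le_br2 α δ w i j ⟨le_trans h0s hsθ, hθδ⟩))
  unfold supN
  refine le_trans ?_ (le_biSup _ (⟨h0s, hsθ⟩ : s ∈ Set.Icc (0:ℝ) θ))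
  exact le_iSup (fun y => ENNReal.ofReal |qyy i j (w θ) s y|) y

lemma space_bound (α δ : ℝ) (w : ℝ → ℝ → Vec d → ℝ) (i j : Fin d)
    (hfin : br2 α δ w ≠ ⊤) {θ s : ℝ} (y y' : Vec d) (hne : y ≠ y')
    (h0s : 0 ≤ s) (hsθ : s ≤ θ) (hθδ : θ ≤ δ) :
    |pyy i j w θ s y - pyy i j w θ s y'| ≤ (br2 α δ w).toReal * ‖y - y'‖ ^ α := by
  have hpos : (0:ℝ) < ‖y - y'‖ ^ α :=
    Real.rpow_pos_of_pos (norm_pos_iff.mpr (sub_ne_zero.mpr hne)) α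
  rw [← div_le_iff₀ hpos, ← ENNReal.ofReal_le_iff_le_toReal hfin]
  refine le_trans ?_ (le_trans (semiY_le_hN α 0 θ (qyy i j (w θ)))
    (hN_qyy_le_br2 α δ w i j ⟨le_trans h0s hsθ, hθδ⟩))
  unfold semiY
  refine le_trans ?_ (le_biSup _ (⟨h0s, hsθ⟩ : s ∈ Set.Icc (0:ℝ) θ))
  refine le_trans ?_ (le_iSup _ y)
  refine le_trans ?_ (le_iSup _ y')
  exact le_iSup (fun _ : y ≠ y' =>
    ENNReal.ofReal (|qyy i j (w θ) s y - qyy i j (w θ) s y'| / ‖y - y'‖ ^ α)) hne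

lemma time_bound (α δ : ℝ) (hα0 : 0 < α) (w : ℝ → ℝ → Vec d → ℝ) (i j : Fin d)
    (hfin : br2 α δ w ≠ ⊤) {θ s s' : ℝ} (y : Vec d)
    (h0s : 0 ≤ s) (hsθ : s ≤ θ) (h0s' : 0 ≤ s') (hs'θ : s' ≤ θ) (hθδ : θ ≤ δ) :
    |pyy i j w θ s y - pyy i j w θ s' y| ≤ (br2 α δ w).toReal * |s - s'| ^ (α / 2) := by
  rcases eq_or_ne s s' with rfl | hne
  · simp only [sub_self, abs_zero]
    positivity
  · have hpos : (0:ℝ) < |s - s'| ^ (α / 2) :=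
      Real.rpow_pos_of_pos (abs_pos.mpr (sub_ne_zero.mpr hne)) _
    rw [← div_le_iff₀ hpos, ← ENNReal.ofReal_le_iff_le_toReal hfin]
    refine le_trans ?_ (le_trans (semiS_le_hN α 0 θ (qyy i j (w θ)))
      (hN_qyy_le_br2 α δ w i j ⟨le_trans h0s hsθ, hθδ⟩))
    unfold semiS
    refine le_trans ?_ (le_biSup _ (⟨h0s, hsθ⟩ : s ∈ Set.Icc (0:ℝ) θ))
    refine le_trans ?_ (le_biSup _ (⟨h0s', hs'θ⟩ : s' ∈ Set.Icc (0:ℝ) θ))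
    refine le_trans ?_ (le_iSup _ hne)
    exact le_iSup (fun y =>
      ENNReal.ofReal (|qyy i j (w θ) s y - qyy i j (w θ) s' y| / |s - s'| ^ (α / 2))) y

lemma integrable_pyy (δ : ℝ) (w : ℝ → ℝ → Vec d → ℝ) (i j : Fin d)
    (hc : ContOnTri δ (pyy i j w)) {s a b : ℝ} (y : Vec d)
    (h0 : 0 ≤ s) (hsa : s ≤ a) (hab : a ≤ b) (hbδ : b ≤ δ) :
    IntervalIntegrable (fun θ => pyy i j w θ s y) MeasureTheory.volume a b := by
  apply ContinuousOn.intervalIntegrable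
  rw [Set.uIcc_of_le hab]
  have hmap : Set.MapsTo (fun θ : ℝ => (θ, s, y)) (Set.Icc a b) (Tri d δ) := by
    intro θ hθ
    exact ⟨h0, le_trans hsa hθ.1, le_trans hθ.2 hbδ⟩
  exact hc.comp (Continuous.continuousOn (by fun_prop)) hmap

end AuxProofs

/-- Parabolic Hölder bound for diagonal integrals of second derivatives:
for `w ∈ Θ^{(2+α)}_{[0,δ]}` (with continuous slice derivatives) and every `t ∈ [0,δ]`,
`| ∫_·^t w_{y_iy_j}(θ,·,·) dθ |^{(α)}_{[0,t]×ℝ^d} ≤ 4 δ^{1−α/2} [w]^{(2+α)}_{[0,δ]}`. -/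
theorem statement12
    (d : ℕ) (hd : 1 ≤ d) (α T δ : ℝ) (hα0 : 0 < α) (hα1 : α < 1) (hT : 0 < T)
    (hδ0 : 0 < δ) (hδ1 : δ ≤ 1) (hδT : δ ≤ T)
    (w : ℝ → ℝ → Vec d → ℝ) (hw : MemTheta2 α δ w) :
    ∀ t ∈ Set.Icc (0:ℝ) δ, ∀ i j : Fin d,
      hN α 0 t (fun s y => ∫ θ in s..t, pyy i j w θ s y) ≤
        ENNReal.ofReal (4 * δ ^ (1 - α / 2)) * br2 α δ w := by
  obtain ⟨hcl, hfin'⟩ := hw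
  have hfin : br2 α δ w ≠ ⊤ := hfin'.ne
  intro t ht i j
  have hcont : ContOnTri δ (pyy i j w) := hcl.2.2.2.2 i j
  set B := (br2 α δ w).toReal with hBdef
  have hB0 : 0 ≤ B := ENNReal.toReal_nonneg
  set R := δ ^ (1 - α / 2) with hRdef
  have hR0 : 0 < R := Real.rpow_pos_of_pos hδ0 _
  have hδR : δ ≤ R := by
    have h := Real.rpow_le_rpow_of_exponent_ge hδ0 hδ1 (by linarith : 1 - α / 2 ≤ 1)
    simpa [Real.rpow_one] using h
  -- sup bound
  have hsup : ∀ s ∈ Set.Icc (0:ℝ) t, ∀ y : Vec d,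
      |∫ θ in s..t, pyy i j w θ s y| ≤ R * B := by
    intro s hs y
    have hb : ∀ x ∈ Set.uIoc s t, ‖pyy i j w x s y‖ ≤ B := by
      intro x hx
      rw [Set.uIoc_of_le hs.2] at hx
      simpa [Real.norm_eq_abs] using
        sup_bound α δ w i j hfin y hs.1 hx.1.le (hx.2.trans ht.2)
    have h := intervalIntegral.norm_integral_le_of_norm_le_const hb
    have hts : |t - s| ≤ δ := by
      rw [abs_of_nonneg (by linarith [hs.2])]
      linarith [hs.1, ht.2]
    calc |∫ θ in s..t, pyy i j w θ s y| ≤ B * |t - s| := by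
          simpa [Real.norm_eq_abs] using h
      _ ≤ R * B := by nlinarith [mul_le_mul_of_nonneg_left (hts.trans hδR) hB0]
  -- space Hölder bound
  have hspace : ∀ s ∈ Set.Icc (0:ℝ) t, ∀ y y' : Vec d, y ≠ y' →
      |(∫ θ in s..t, pyy i j w θ s y) - ∫ θ in s..t, pyy i j w θ s y'| ≤
        R * B * ‖y - y'‖ ^ α := by
    intro s hs y y' hne
    have hi1 := integrable_pyy δ w i j hcont y hs.1 le_rfl hs.2 ht.2
    have hi2 := integrable_pyy δ w i j hcont y' hs.1 le_rfl hs.2 ht.2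
    rw [← intervalIntegral.integral_sub hi1 hi2]
    have hb : ∀ x ∈ Set.uIoc s t,
        ‖pyy i j w x s y - pyy i j w x s y'‖ ≤ B * ‖y - y'‖ ^ α := by
      intro x hx
      rw [Set.uIoc_of_le hs.2] at hx
      simpa [Real.norm_eq_abs] using
        space_bound α δ w i j hfin y y' hne hs.1 hx.1.le (hx.2.trans ht.2)
    have h := intervalIntegral.norm_integral_le_of_norm_le_const hb
    have hts : |t - s| ≤ δ := by
      rw [abs_of_nonneg (by linarith [hs.2])]
      linarith [hs.1, ht.2]
    have hpα : (0:ℝ) ≤ ‖y - y'‖ ^ α := Real.rpow_nonneg (norm_nonneg _) _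
    calc |∫ θ in s..t, (pyy i j w θ s y - pyy i j w θ s y')|
        ≤ B * ‖y - y'‖ ^ α * |t - s| := by simpa [Real.norm_eq_abs] using h
      _ ≤ R * B * ‖y - y'‖ ^ α := by
          nlinarith [mul_le_mul_of_nonneg_left (hts.trans hδR) (mul_nonneg hB0 hpα)]
  -- time Hölder bound (for a < b)
  have htime : ∀ a b : ℝ, ∀ y : Vec d, 0 ≤ a → a < b → b ≤ t →
      |(∫ θ in a..t, pyy i j w θ a y) - ∫ θ in b..t, pyy i j w θ b y| ≤
        2 * (R * B) * (b - a) ^ (α / 2) := by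
    intro a b y h0a hab hbt
    have h0b : 0 ≤ b := le_trans h0a hab.le
    have hi1 := integrable_pyy δ w i j hcont (s := a) y h0a le_rfl hab.le (hbt.trans ht.2)
    have hi2 := integrable_pyy δ w i j hcont (s := a) y h0a hab.le hbt ht.2
    have hi3 := integrable_pyy δ w i j hcont (s := b) y h0b le_rfl hbt ht.2
    have hsplit := intervalIntegral.integral_add_adjacent_intervals hi1 hi2
    have hkey : (∫ θ in a..t, pyy i j w θ a y) - ∫ θ in b..t, pyy i j w θ b y =
        (∫ θ in a..b, pyy i j w θ a y) +
          ∫ θ in b..t, (pyy i j w θ a y - pyy i j w θ b y) := by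
      rw [intervalIntegral.integral_sub hi2 hi3, ← hsplit]
      ring
    have hb1 : ∀ x ∈ Set.uIoc a b, ‖pyy i j w x a y‖ ≤ B := by
      intro x hx
      rw [Set.uIoc_of_le hab.le] at hx
      simpa [Real.norm_eq_abs] using
        sup_bound α δ w i j hfin y h0a hx.1.le ((hx.2.trans hbt).trans ht.2)
    have h1 := intervalIntegral.norm_integral_le_of_norm_le_const hb1
    have habs : |a - b| = b - a := by
      rw [abs_sub_comm, abs_of_pos (by linarith)]
    have hb2 : ∀ x ∈ Set.uIoc b t,
        ‖pyy i j w x a y - pyy i j w x b y‖ ≤ B * (b - a) ^ (α / 2) := by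
      intro x hx
      rw [Set.uIoc_of_le hbt] at hx
      have := time_bound α δ hα0 w i j hfin y h0a (le_trans hab.le hx.1.le) h0b
        hx.1.le (hx.2.trans ht.2)
      rw [habs] at this
      simpa [Real.norm_eq_abs] using this
    have h2 := intervalIntegral.norm_integral_le_of_norm_le_const hb2
    have hba0 : (0:ℝ) < b - a := by linarith
    have hP0 : (0:ℝ) ≤ (b - a) ^ (α / 2) := Real.rpow_nonneg hba0.le _
    have hpow_eq : (b - a) ^ (α / 2) * (b - a) ^ (1 - α / 2) = b - a := by
      rw [← Real.rpow_add hba0]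
      norm_num
    have hQle : (b - a) ^ (1 - α / 2) ≤ R :=
      Real.rpow_le_rpow hba0.le (by linarith [ht.2]) (by linarith)
    have e1 : |∫ θ in a..b, pyy i j w θ a y| ≤ B * (b - a) ^ (α / 2) * R := by
      have h1' : |∫ θ in a..b, pyy i j w θ a y| ≤ B * (b - a) := by
        simpa [Real.norm_eq_abs, abs_of_pos hba0] using h1
      have heq : B * (b - a) =
          B * ((b - a) ^ (α / 2) * (b - a) ^ (1 - α / 2)) := by rw [hpow_eq]
      calc |∫ θ in a..b, pyy i j w θ a y| ≤ B * (b - a) := h1'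
        _ = B * ((b - a) ^ (α / 2) * (b - a) ^ (1 - α / 2)) := heq
        _ ≤ B * ((b - a) ^ (α / 2) * R) :=
            mul_le_mul_of_nonneg_left (mul_le_mul_of_nonneg_left hQle hP0) hB0
        _ = B * (b - a) ^ (α / 2) * R := by ring
    have e2 : |∫ θ in b..t, (pyy i j w θ a y - pyy i j w θ b y)| ≤
        B * (b - a) ^ (α / 2) * R := by
      have h2' : |∫ θ in b..t, (pyy i j w θ a y - pyy i j w θ b y)| ≤
          B * (b - a) ^ (α / 2) * (t - b) := by
        simpa [Real.norm_eq_abs, abs_of_nonneg (show (0:ℝ) ≤ t - b by linarith)] using h2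
      refine h2'.trans (mul_le_mul_of_nonneg_left ?_ (mul_nonneg hB0 hP0))
      linarith [ht.2, hδR, h0b]
    calc |(∫ θ in a..t, pyy i j w θ a y) - ∫ θ in b..t, pyy i j w θ b y|
        ≤ |∫ θ in a..b, pyy i j w θ a y| +
          |∫ θ in b..t, (pyy i j w θ a y - pyy i j w θ b y)| := by
          rw [hkey]; exact abs_add_le _ _
      _ ≤ 2 * (R * B) * (b - a) ^ (α / 2) := by nlinarith [e1, e2]
  -- assemble
  have hA : supN 0 t (fun s y => ∫ θ in s..t, pyy i j w θ s y) ≤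
      ENNReal.ofReal (R * B) := by
    unfold supN
    refine iSup₂_le fun s hs => iSup_le fun y => ?_
    exact ENNReal.ofReal_le_ofReal (hsup s hs y)
  have hC : semiY α 0 t (fun s y => ∫ θ in s..t, pyy i j w θ s y) ≤
      ENNReal.ofReal (R * B) := by
    unfold semiY
    refine iSup₂_le fun s hs => iSup_le fun y => iSup_le fun y' => iSup_le fun hne => ?_
    apply ENNReal.ofReal_le_ofReal
    have hpos : (0:ℝ) < ‖y - y'‖ ^ α :=
      Real.rpow_pos_of_pos (norm_pos_iff.mpr (sub_ne_zero.mpr hne)) α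
    rw [div_le_iff₀ hpos]
    exact hspace s hs y y' hne
  have hB' : semiS α 0 t (fun s y => ∫ θ in s..t, pyy i j w θ s y) ≤
      ENNReal.ofReal (2 * (R * B)) := by
    unfold semiS
    refine iSup₂_le fun s hs => iSup₂_le fun s' hs' => iSup_le fun hne => iSup_le fun y => ?_
    apply ENNReal.ofReal_le_ofReal
    have hpos : (0:ℝ) < |s - s'| ^ (α / 2) :=
      Real.rpow_pos_of_pos (abs_pos.mpr (sub_ne_zero.mpr hne)) _
    rw [div_le_iff₀ hpos]
    rcases hne.lt_or_gt with h | h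
    · have := htime s s' y hs.1 h hs'.2
      rw [abs_sub_comm s s', abs_of_pos (by linarith : (0:ℝ) < s' - s)]
      exact this
    · have := htime s' s y hs'.1 h hs.2
      rw [abs_of_pos (by linarith : (0:ℝ) < s - s'), abs_sub_comm]
      exact this
  have hsum : hN α 0 t (fun s y => ∫ θ in s..t, pyy i j w θ s y) ≤
      ENNReal.ofReal (4 * R * B) := by
    unfold hN
    refine le_trans (add_le_add (add_le_add hA hB') hC) ?_
    have hRB : (0:ℝ) ≤ R * B := mul_nonneg hR0.le hB0
    rw [← ENNReal.ofReal_add hRB (by linarith),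
      ← ENNReal.ofReal_add (by linarith) hRB]
    exact ENNReal.ofReal_le_ofReal (by nlinarith)
  calc hN α 0 t (fun s y => ∫ θ in s..t, pyy i j w θ s y) ≤
      ENNReal.ofReal (4 * R * B) := hsum
    _ = ENNReal.ofReal (4 * R) * br2 α δ w := by
      rw [ENNReal.ofReal_mul (by nlinarith : (0:ℝ) ≤ 4 * R), hBdef,
        ENNReal.ofReal_toReal hfin]
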